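/- Suppose f : ℝ₊³ → ℝ is symmetric and satisfies f(x,y,z) = f(x, y+z, 0) + f(0, y/(y+z), z/(y+z)) for all x, y, z > 0. Then there exists φ : ℝ₊₊ → ℝ such that f(x,y,z) = φ(x+y+z) for all x, y, z > 0. -/

import Mathlib

private def cycPerm : Equiv.Perm (Fin 3) :=
  ⟨![2, 0, 1], ![1, 2, 0], by decide, by decide⟩

section aux

variable (f : ℝ → ℝ → ℝ → ℝ)

/-- `hh f t = f 0 t (1-t)`. -/
private noncomputable def hh (t : ℝ) : ℝ := f 0 t (1 - t)

/-- `th f t = hh f (t/(1+t))`. -/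
private noncomputable def th (t : ℝ) : ℝ := hh f (t / (1 + t))

variable
    (hsym : ∀ x y z : ℝ, 0 ≤ x → 0 ≤ y → 0 ≤ z → ∀ σ : Equiv.Perm (Fin 3),
      f x y z = f (![x, y, z] (σ 0)) (![x, y, z] (σ 1)) (![x, y, z] (σ 2)))
    (heq : ∀ x y z : ℝ, 0 < x → 0 < y → 0 < z →
      f x y z = f x (y + z) 0 + f 0 (y / (y + z)) (z / (y + z)))

include hsym

private lemma swap02 (x y z : ℝ) (hx : 0 ≤ x) (hy : 0 ≤ y) (hz : 0 ≤ z) :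
    f x y z = f z y x := by
  have := hsym x y z hx hy hz (Equiv.swap 0 2)
  simpa [Equiv.swap_apply_def, Fin.ext_iff] using this

private lemma swap12 (x y z : ℝ) (hx : 0 ≤ x) (hy : 0 ≤ y) (hz : 0 ≤ z) :
    f x y z = f x z y := by
  have := hsym x y z hx hy hz (Equiv.swap 1 2)
  simpa [Equiv.swap_apply_def, Fin.ext_iff] using this

private lemma cyc (x y z : ℝ) (hx : 0 ≤ x) (hy : 0 ≤ y) (hz : 0 ≤ z) :
    f x y z = f z x y := by
  have := hsym x y z hx hy hz cycPerm
  simpa [cycPerm] using this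

/-- symmetry of `hh`. -/
private lemma hh_sym (t : ℝ) (h0 : 0 ≤ t) (h1 : t ≤ 1) : hh f t = hh f (1 - t) := by
  unfold hh
  have := swap12 f hsym 0 t (1 - t) le_rfl h0 (by linarith)
  rw [this]
  congr 1
  ring

/-- `f p q 0 = hh f p` when `p + q = 1`. -/
private lemma f_half (p q : ℝ) (hp : 0 ≤ p) (hq : 0 ≤ q) (hpq : p + q = 1) :
    f p q 0 = hh f p := by
  have := cyc f hsym p q 0 hp hq le_rfl
  rw [this]
  unfold hh
  congr 1
  linarith

include heq

/-- folding the second term of heq into `hh`. -/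
private lemma heq' (x y z : ℝ) (hx : 0 < x) (hy : 0 < y) (hz : 0 < z) :
    f x y z = f x (y + z) 0 + hh f (y / (y + z)) := by
  rw [heq x y z hx hy hz]
  unfold hh
  congr 2
  have hyz : 0 < y + z := by linarith
  field_simp
  ring

/-- the core exchange identity. -/
private lemma exch (x y z : ℝ) (hx : 0 < x) (hy : 0 < y) (hz : 0 < z) :
    f x (y + z) 0 + hh f (y / (y + z)) = f z (y + x) 0 + hh f (y / (y + x)) := by
  have h1 := heq' f hsym heq x y z hx hy hz
  have h2 := heq' f hsym heq z y x hz hy hx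
  have h3 := swap02 f hsym x y z hx.le hy.le hz.le
  linarith

/-- the Omega identity for `th`. -/
private lemma omega (a b : ℝ) (ha : 0 < a) (hb : 0 < b) :
    th f (a / (1 + b)) + th f b = th f (b / (1 + a)) + th f a := by
  have hs : (0:ℝ) < 1 + a + b := by linarith
  have hs0 : (1 + a + b : ℝ) ≠ 0 := ne_of_gt hs
  have hb1 : (0:ℝ) < 1 + b := by linarith
  have ha1 : (0:ℝ) < 1 + a := by linarith
  have key := exch f hsym heq (a / (1+a+b)) (1 / (1+a+b)) (b / (1+a+b))
    (by positivity) (by positivity) (by positivity)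
  -- rewrite the four terms
  have e1 : f (a/(1+a+b)) (1/(1+a+b) + b/(1+a+b)) 0 = hh f (a/(1+a+b)) := by
    rw [f_half f hsym (a/(1+a+b)) (1/(1+a+b) + b/(1+a+b)) (by positivity) (by positivity)
      (by field_simp; ring)]
  have e2 : (1/(1+a+b) : ℝ) / (1/(1+a+b) + b/(1+a+b)) = 1/(1+b) := by
    rw [← add_div]
    field_simp
  have e3 : f (b/(1+a+b)) (1/(1+a+b) + a/(1+a+b)) 0 = hh f (b/(1+a+b)) := by
    rw [f_half f hsym (b/(1+a+b)) (1/(1+a+b) + a/(1+a+b)) (by positivity) (by positivity)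
      (by field_simp; ring)]
  have e4 : (1/(1+a+b) : ℝ) / (1/(1+a+b) + a/(1+a+b)) = 1/(1+a) := by
    rw [← add_div]
    field_simp
  rw [e1, e2, e3, e4] at key
  -- now key : hh f (a/(1+a+b)) + hh f (1/(1+b)) = hh f (b/(1+a+b)) + hh f (1/(1+a))
  have t1 : th f (a / (1 + b)) = hh f (a/(1+a+b)) := by
    unfold th
    congr 1
    rw [show (1:ℝ) + a/(1+b) = (1+a+b)/(1+b) by field_simp <;> ring_nf,
       div_div_div_cancel_right₀ (ne_of_gt hb1)]
  have t2 : th f b = hh f (1/(1+b)) := by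
    unfold th
    rw [hh_sym f hsym (b/(1+b)) (by positivity) (by
      rw [div_le_one hb1]; linarith)]
    congr 1
    field_simp
    ring
  have t3 : th f (b / (1 + a)) = hh f (b/(1+a+b)) := by
    unfold th
    congr 1
    rw [show (1:ℝ) + b/(1+a) = (1+a+b)/(1+a) by field_simp <;> ring_nf,
       div_div_div_cancel_right₀ (ne_of_gt ha1)]
  have t4 : th f a = hh f (1/(1+a)) := by
    unfold th
    rw [hh_sym f hsym (a/(1+a)) (by positivity) (by
      rw [div_le_one ha1]; linarith)]
    congr 1
    field_simp
    ring
  rw [t1, t2, t3, t4]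
  linarith

omit heq in
/-- inversion symmetry of `th`. -/
private lemma th_inv (t : ℝ) (ht : 0 < t) : th f t = th f (1/t) := by
  have h1 : (0:ℝ) < 1 + t := by linarith
  unfold th
  rw [hh_sym f hsym (t/(1+t)) (by positivity) (by rw [div_le_one h1]; linarith)]
  congr 1
  field_simp
  ring

/-- the multiplicative Jensen identity. -/
private lemma star (x y : ℝ) (hx : 0 < x) (hy : 0 < y) :
    th f x + th f y = 2 * th f (x + y + x*y) := by
  have hx1 : (0:ℝ) < 1 + x := by linarith
  have hy1 : (0:ℝ) < 1 + y := by linarith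
  have e1 := omega f hsym heq (x + y + x*y) (y*(1+x)/x) (by positivity) (by positivity)
  have hc0 : x + y + x*y ≠ 0 := by positivity
  have hx0 : x ≠ 0 := ne_of_gt hx
  have hy0 : y ≠ 0 := ne_of_gt hy
  have a1 : (x + y + x*y) / (1 + y*(1+x)/x) = x := by
    rw [show (1:ℝ) + y*(1+x)/x = (x+y+x*y)/x by field_simp <;> ring_nf,
       div_div_eq_mul_div, mul_comm, mul_div_assoc, div_self hc0, mul_one]
  have a2 : (y*(1+x)/x) / (1 + (x + y + x*y)) = y/(x*(1+y)) := by
    rw [div_div, div_eq_div_iff (by positivity) (by positivity)]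
    ring
  rw [a1, a2] at e1
  have i1 : th f (y*(1+x)/x) = th f (x/(y*(1+x))) := by
    rw [th_inv f hsym (y*(1+x)/x) (by positivity), one_div_div]
  rw [i1] at e1
  have e2 := omega f hsym heq (y + x + y*x) (x*(1+y)/y) (by positivity) (by positivity)
  have hd0 : y + x + y*x ≠ 0 := by positivity
  have b1 : (y + x + y*x) / (1 + x*(1+y)/y) = y := by
    rw [show (1:ℝ) + x*(1+y)/y = (y+x+y*x)/y by field_simp <;> ring_nf,
       div_div_eq_mul_div, mul_comm, mul_div_assoc, div_self hd0, mul_one]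
  have b2 : (x*(1+y)/y) / (1 + (y + x + y*x)) = x/(y*(1+x)) := by
    rw [div_div, div_eq_div_iff (by positivity) (by positivity)]
    ring
  rw [b1, b2] at e2
  have i2 : th f (x*(1+y)/y) = th f (y/(x*(1+y))) := by
    rw [th_inv f hsym (x*(1+y)/y) (by positivity), one_div_div]
  rw [i2] at e2
  have c1 : (y + x + y*x) = (x + y + x*y) := by ring
  rw [c1] at e2
  linarith

/-- squaring invariance. -/
private lemma th_sq (X : ℝ) (hX : 1 < X) : th f (X - 1) = th f (X^2 - 1) := by
  have h := star f hsym heq (X-1) (X-1) (by linarith) (by linarith)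
  have : (X-1) + (X-1) + (X-1)*(X-1) = X^2 - 1 := by ring
  rw [this] at h
  linarith

/-- absorbing a smaller factor. -/
private lemma th_absorb (A M : ℝ) (hA : 1 < A) (hAM : A < M) :
    th f (A*M - 1) = th f (M - 1) := by
  have hA0 : (0:ℝ) < A := by linarith
  have hB : 1 < M / A := (one_lt_div hA0).mpr hAM
  have s1 := star f hsym heq (A - 1) (M/A - 1) (by linarith) (by linarith)
  have s2 := star f hsym heq (A^2 - 1) (M/A - 1) (by nlinarith) (by linarith)
  have q := th_sq f hsym heq A hA
  have r1 : (A - 1) + (M/A - 1) + (A - 1)*(M/A - 1) = M - 1 := by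
    field_simp
    ring
  have r2 : (A^2 - 1) + (M/A - 1) + (A^2 - 1)*(M/A - 1) = A*M - 1 := by
    field_simp
    ring
  rw [r1] at s1
  rw [r2] at s2
  linarith

/-- `th` is constant on positives. -/
private lemma th_const (u v : ℝ) (hu : 0 < u) (hv : 0 < v) : th f u = th f v := by
  have key : ∀ U V : ℝ, 1 < U → U < V → th f (U - 1) = th f (V - 1) := by
    intro U V hU hUV
    have s := star f hsym heq (U - 1) (V - 1) (by linarith) (by linarith)
    have r : (U - 1) + (V - 1) + (U - 1)*(V - 1) = U*V - 1 := by ring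
    rw [r] at s
    have ab := th_absorb f hsym heq U V hU hUV
    linarith
  rcases lt_trichotomy u v with h | h | h
  · have := key (1 + u) (1 + v) (by linarith) (by linarith)
    simpa using this
  · rw [h]
  · have := key (1 + v) (1 + u) (by linarith) (by linarith)
    simp at this
    linarith [this]
  
/-- `hh` is constant on `(0,1)`. -/
private lemma hh_const (p : ℝ) (h0 : 0 < p) (h1 : p < 1) : hh f p = hh f (1/2) := by
  have h1p : (0:ℝ) < 1 - p := by linarith
  have e : th f (p / (1 - p)) = hh f p := by
    unfold th
    congr 1
    rw [show (1:ℝ) + p/(1-p) = 1/(1-p) by field_simp; ring,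
       div_div_div_cancel_right₀ (ne_of_gt h1p), div_one]
  have e2 : th f 1 = hh f (1/2) := by
    unfold th
    norm_num
  rw [← e, ← e2]
  exact th_const f hsym heq (p/(1-p)) 1 (by positivity) one_pos

/-- `f x (s-x) 0` does not depend on `x ∈ (0,s)`. -/
private lemma base (s x x' : ℝ) (hx : 0 < x) (hxs : x < s) (hx' : 0 < x') (hxs' : x' < s) :
    f x (s - x) 0 = f x' (s - x') 0 := by
  have step : ∀ a b c : ℝ, 0 < a → 0 < b → 0 < c → f a (b + c) 0 = f c (b + a) 0 := by
    intro a b c ha hb hc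
    have h := exch f hsym heq a b c ha hb hc
    have hb1 : b / (b + c) < 1 := by
      rw [div_lt_one (by linarith)]; linarith
    have hb2 : b / (b + a) < 1 := by
      rw [div_lt_one (by linarith)]; linarith
    rw [hh_const f hsym heq (b/(b+c)) (by positivity) hb1,
        hh_const f hsym heq (b/(b+a)) (by positivity) hb2] at h
    linarith
  set e := min (s - x) (s - x') / 2 with hedef
  have he : 0 < e := by
    apply div_pos _ two_pos
    exact lt_min (by linarith) (by linarith)
  have m1 := min_le_left (s - x) (s - x')
  have m2 := min_le_right (s - x) (s - x')
  have he1 : e < s - x := by rw [hedef]; linarith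
  have he2 : e < s - x' := by rw [hedef]; linarith
  have p1 : f x (s - x) 0 = f e (s - e) 0 := by
    have := step x (s - x - e) e hx (by linarith) he
    have r1 : (s - x - e) + e = s - x := by ring
    have r2 : (s - x - e) + x = s - e := by ring
    rw [r1, r2] at this
    exact this
  have p2 : f x' (s - x') 0 = f e (s - e) 0 := by
    have := step x' (s - x' - e) e hx' (by linarith) he
    have r1 : (s - x' - e) + e = s - x' := by ring
    have r2 : (s - x' - e) + x' = s - e := by ring
    rw [r1, r2] at this
    exact this
  rw [p1, p2]

end aux

/-- Solutions of the modified entropy equation, case α = 0. -/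
theorem stmt_12 (f : ℝ → ℝ → ℝ → ℝ)
    (hsym : ∀ x y z : ℝ, 0 ≤ x → 0 ≤ y → 0 ≤ z → ∀ σ : Equiv.Perm (Fin 3),
      f x y z = f (![x, y, z] (σ 0)) (![x, y, z] (σ 1)) (![x, y, z] (σ 2)))
    (heq : ∀ x y z : ℝ, 0 < x → 0 < y → 0 < z →
      f x y z = f x (y + z) 0 + f 0 (y / (y + z)) (z / (y + z))) :
    ∃ φ : ℝ → ℝ, ∀ x y z : ℝ, 0 < x → 0 < y → 0 < z →
      f x y z = φ (x + y + z) := by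
  refine ⟨fun s => f (s/2) (s/2) 0 + f 0 (1/2) (1/2), ?_⟩
  intro x y z hx hy hz
  set s := x + y + z with hs
  have hyz : 0 < y + z := by linarith
  have h1 := heq' f hsym heq x y z hx hy hz
  have h2 : hh f (y / (y + z)) = hh f (1/2) := by
    apply hh_const f hsym heq
    · positivity
    · rw [div_lt_one hyz]; linarith
  have h3 : hh f (1/2) = f 0 (1/2) (1/2) := by
    unfold hh
    norm_num
  have h4 : f x (y + z) 0 = f (s/2) (s/2) 0 := by
    have hxs : x < s := by rw [hs]; linarith
    have hs2 : 0 < s/2 := by rw [hs]; linarith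
    have hs2' : s/2 < s := by rw [hs]; linarith
    have := base f hsym heq s x (s/2) hx hxs hs2 hs2'
    have r1 : s - x = y + z := by rw [hs]; ring
    have r2 : s - s/2 = s/2 := by ring
    rw [r1, r2] at this
    exact this
  rw [h1, h2, h3, h4]
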